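/- Let N ≥ n_x be positive integers, A ∈ ℝ^{n_x×n_x}, B ∈ ℝ^{n_x×n_u}, let ξ ∈ ℝ^{n_u} be a unit vector, and let M ∈ ℝ^{n_u×(n_u−1)} be a matrix whose columns form a basis of the hyperplane {v ∈ ℝ^{n_u} : ⟪ξ, v⟫ = 0}. Suppose that for every choice of n_x distinct indices P₁, …, P_{n_x} ∈ {1, …, N}, the block matrix [A^{N−P₁}BM, …, A^{N−P_{n_x}}BM] has rank n_x. Then for every nonzero η ∈ ℝ^{n_x}, the number of indices i ∈ {1, …, N} for which Bᵀ(Aᵀ)^{N−i}η is a scalar multiple of ξ is at most n_x − 1. -/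

import Mathlib

open RealInnerProductSpace Matrix

open scoped Classical

/-- Identification of a plain vector in `Fin n → ℝ` with a point of Euclidean space. -/
noncomputable def toE {n : ℕ} (v : Fin n → ℝ) : EuclideanSpace ℝ (Fin n) :=
  (EuclideanSpace.equiv (Fin n) ℝ).symm v

/-- If the columns of `M` form a basis of the hyperplane orthogonal to the
unit vector `ξ`, and for every choice of `n_x` distinct indices `P₁, …, P_{n_x} ∈ {1, …, N}`
the block matrix `[A^{N−P₁}BM, …, A^{N−P_{n_x}}BM]` has rank `n_x`, then for every nonzero
`η` the number of indices `i ∈ {1, …, N}` for which `Bᵀ(Aᵀ)^{N−i}η` is a scalar multiple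
of `ξ` is at most `n_x − 1`. -/
theorem stmt_10 (nx nu N : ℕ) (hnx : 0 < nx) (hN : nx ≤ N)
    (A : Matrix (Fin nx) (Fin nx) ℝ) (B : Matrix (Fin nx) (Fin nu) ℝ)
    (ξ : EuclideanSpace ℝ (Fin nu)) (hξ : ‖ξ‖ = 1)
    (M : Matrix (Fin nu) (Fin (nu - 1)) ℝ)
    (hindep : LinearIndependent ℝ (fun j : Fin (nu - 1) => toE (Mᵀ j)))
    (hspan : (Submodule.span ℝ (Set.range fun j : Fin (nu - 1) => toE (Mᵀ j)) : Set _) =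
      {v : EuclideanSpace ℝ (Fin nu) | ⟪ξ, v⟫ = 0})
    (hrank : ∀ P : Fin nx → ℕ, (∀ j, P j ∈ Finset.Icc 1 N) → Function.Injective P →
      (Matrix.of fun r (p : Fin nx × Fin (nu - 1)) =>
        (A ^ (N - P p.1) * B * M) r p.2).rank = nx) :
    ∀ η : Fin nx → ℝ, η ≠ 0 →
      ((Finset.Icc 1 N).filter fun i =>
        ∃ c : ℝ, toE ((Bᵀ * (Aᵀ) ^ (N - i)) *ᵥ η) = c • ξ).card ≤ nx - 1 := by
  intro η hη
  by_contra hcard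
  push_neg at hcard
  -- so the card is ≥ nx
  have hcard' : nx ≤ ((Finset.Icc 1 N).filter fun i =>
      ∃ c : ℝ, toE ((Bᵀ * (Aᵀ) ^ (N - i)) *ᵥ η) = c • ξ).card := by omega
  obtain ⟨T, hTsub, hTcard⟩ := Finset.exists_subset_card_eq hcard'
  -- build P from T
  have hTpos : 0 < T.card := by omega
  let e := T.orderIsoOfFin hTcard
  set P : Fin nx → ℕ := fun j => (e j : ℕ) with hP
  have hPmem : ∀ j, P j ∈ Finset.Icc 1 N := fun j =>
    Finset.mem_of_mem_filter _ (hTsub (e j).2)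
  have hPinj : Function.Injective P := by
    intro a b hab
    have : (e a : ℕ) = (e b : ℕ) := hab
    exact e.injective (Subtype.ext this)
  have hrk := hrank P hPmem hPinj
  -- each column of M is orthogonal to ξ
  have hMξ : ∀ col : Fin (nu - 1), ∑ k, ξ k * M k col = 0 := by
    intro col
    have hmem : toE (Mᵀ col) ∈
        (Submodule.span ℝ (Set.range fun j : Fin (nu - 1) => toE (Mᵀ j)) : Set _) :=
      Submodule.subset_span ⟨col, rfl⟩
    rw [hspan] at hmem
    simpa [PiLp.inner_apply, RCLike.inner_apply, toE, mul_comm] using hmem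
  -- the key matrix
  set K : Matrix (Fin nx) (Fin nx × Fin (nu - 1)) ℝ :=
    Matrix.of fun r (p : Fin nx × Fin (nu - 1)) => (A ^ (N - P p.1) * B * M) r p.2 with hK
  -- η is in the kernel of Kᵀ
  have hker : Kᵀ *ᵥ η = 0 := by
    funext p
    obtain ⟨j, col⟩ := p
    have hjT : P j ∈ T := (e j).2
    obtain ⟨c, hc⟩ := (Finset.mem_filter.mp (hTsub hjT)).2
    have hc' : (Bᵀ * (Aᵀ) ^ (N - P j)) *ᵥ η = fun k => c * ξ k := by
      funext k
      have := congrArg (fun v => v k) hc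
      simpa [toE] using this
    have h1 : (Kᵀ *ᵥ η) (j, col) = ((A ^ (N - P j) * B * M)ᵀ *ᵥ η) col := rfl
    rw [h1, Matrix.transpose_mul, Matrix.transpose_mul, Matrix.transpose_pow,
      ← Matrix.mulVec_mulVec, hc']
    have : (Mᵀ *ᵥ fun k => c * ξ k) col = c * ∑ k, ξ k * M k col := by
      simp [Matrix.mulVec, dotProduct, Finset.mul_sum]
      congr 1
      funext k
      ring
    rw [this, hMξ col, mul_zero]
    rfl
  -- rank contradiction
  have hηker : η ∈ LinearMap.ker Kᵀ.mulVecLin := by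
    rw [LinearMap.mem_ker, Matrix.mulVecLin_apply]
    exact hker
  have hkerne : LinearMap.ker Kᵀ.mulVecLin ≠ ⊥ := by
    intro h
    rw [h] at hηker
    exact hη (by simpa using hηker)
  have hkerpos : 0 < Module.finrank ℝ (LinearMap.ker Kᵀ.mulVecLin) := by
    rw [Module.finrank_pos_iff]
    exact Submodule.nontrivial_iff_ne_bot.mpr hkerne
  have hrn := LinearMap.finrank_range_add_finrank_ker Kᵀ.mulVecLin
  have hdom : Module.finrank ℝ (Fin nx → ℝ) = nx := by simp
  have hKt : Kᵀ.rank = nx := by rw [Matrix.rank_transpose]; exact hrk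
  have : Kᵀ.rank < nx := by
    rw [Matrix.rank]
    omega
  omega
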